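/- For any real t with 1 < t ≤ 2, the sum Σ_{i=0}^{∞} 4^i/(t^{2^i} - 1) is at most 24/(t-1)². -/

import Mathlib

lemma aux_two_mul_le_two_pow (k : ℕ) : 2 * k ≤ 2 ^ k := by
  induction k with
  | zero => simp
  | succ n ih =>
    rcases Nat.eq_zero_or_pos n with h | h
    · subst h; norm_num
    · have h2 : 2 ≤ 2 ^ n := by
        calc 2 = 2 ^ 1 := by norm_num
        _ ≤ 2 ^ n := Nat.pow_le_pow_right (by norm_num) h
      have h3 : 2 ^ (n + 1) = 2 ^ n + 2 ^ n := by ring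
      omega

theorem stmt_14 (t : ℝ) (ht1 : 1 < t) (ht2 : t ≤ 2) :
    ∑' i : ℕ, (4 : ℝ) ^ i / (t ^ 2 ^ i - 1) ≤ 24 / (t - 1) ^ 2 := by
  classical
  set ε := t - 1 with hεdef
  have hε : 0 < ε := by simp only [hεdef]; linarith
  have hε1 : ε ≤ 1 := by simp only [hεdef]; linarith
  have h1t : 1 + ε = t := by simp only [hεdef]; ring
  set f : ℕ → ℝ := fun i => (4 : ℝ) ^ i / (t ^ 2 ^ i - 1) with hfdef
  have hden : ∀ i : ℕ, 1 < t ^ 2 ^ i := fun i =>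
    one_lt_pow₀ ht1 (Nat.pos_of_ne_zero (fun h => by simp at h) |>.ne')
  clear_value ε
  have hεne : ε ≠ 0 := ne_of_gt hε
  have hfpos : ∀ i : ℕ, 0 < f i := by
    intro i
    have h := hden i
    simp only [hfdef]
    apply div_pos (by positivity)
    linarith
  -- existence of a threshold N
  have hPex : ∃ n : ℕ, 5 ≤ (2 : ℝ) ^ n * ε := by
    obtain ⟨n, hn⟩ := pow_unbounded_of_one_lt (5 / ε) (by norm_num : (1 : ℝ) < 2)
    refine ⟨n, ?_⟩
    rw [div_lt_iff₀ hε] at hn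
    linarith
  set N := Nat.find hPex with hNdef
  have hN : 5 ≤ (2 : ℝ) ^ N * ε := Nat.find_spec hPex
  have hN1 : 1 ≤ N := by
    rcases Nat.eq_zero_or_pos N with h0 | h0
    · rw [h0] at hN; simp at hN; linarith
    · exact h0
  have hμ5 : (2 : ℝ) ^ (N - 1) * ε < 5 := by
    have := Nat.find_min hPex (m := N - 1) (by omega)
    push_neg at this
    exact this
  clear_value N
  clear hNdef
  set μ := (2 : ℝ) ^ (N - 1) with hμdef
  have hμpos : 0 < μ := by positivity
  clear_value μ
  have h2N : (2 : ℝ) ^ N = 2 * μ := by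
    rw [hμdef, mul_comm, ← pow_succ]
    congr 1
    omega
  have hμε : 5 / 2 ≤ μ * ε := by
    rw [h2N] at hN
    nlinarith
  -- lower bound on t ^ 2 ^ (N-1)
  have ha : (7 / 2 : ℝ) ≤ t ^ 2 ^ (N - 1) := by
    have hb := one_add_mul_le_pow (show (-2 : ℝ) ≤ ε by linarith) (2 ^ (N - 1))
    rw [h1t] at hb
    push_cast at hb
    have h5 : (1 : ℝ) + μ * ε ≤ t ^ 2 ^ (N - 1) := by
      rw [hμdef]; exact hb
    linarith
  set C : ℝ := μ ^ 2 * (16 / 45) with hCdef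
  have hCpos : 0 < C := by
    rw [hCdef]; exact mul_pos (pow_pos hμpos 2) (by norm_num)
  clear_value C
  have h4μ : (4 : ℝ) ^ (N - 1) = μ ^ 2 := by
    rw [hμdef, ← pow_mul, mul_comm, pow_mul]; norm_num
  -- the tail bound
  have htail : ∀ j : ℕ, f (j + N) ≤ C * (16 / 49) ^ j := by
    intro j
    have hk : j + N = (N - 1) + (j + 1) := by omega
    have hexp : (2 : ℕ) ^ (j + N) = 2 ^ (N - 1) * 2 ^ (j + 1) := by
      rw [hk, pow_add]
    have hpow : t ^ 2 ^ (j + N) = (t ^ 2 ^ (N - 1)) ^ 2 ^ (j + 1) := by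
      rw [hexp, pow_mul]
    have h1 : ((49 : ℝ) / 4) ^ (j + 1) ≤ (t ^ 2 ^ (N - 1)) ^ 2 ^ (j + 1) := by
      calc ((49 : ℝ) / 4) ^ (j + 1) = ((7 / 2 : ℝ) ^ 2) ^ (j + 1) := by norm_num
      _ = (7 / 2 : ℝ) ^ (2 * (j + 1)) := by rw [← pow_mul]
      _ ≤ (7 / 2 : ℝ) ^ 2 ^ (j + 1) :=
        pow_le_pow_right₀ (by norm_num) (aux_two_mul_le_two_pow (j + 1))
      _ ≤ (t ^ 2 ^ (N - 1)) ^ 2 ^ (j + 1) := pow_le_pow_left₀ (by norm_num) ha _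
    have hself : (49 / 4 : ℝ) ≤ (49 / 4 : ℝ) ^ (j + 1) :=
      le_self_pow₀ (by norm_num) (by omega)
    have h2 : ((49 : ℝ) / 4) ^ (j + 1) * (45 / 49) ≤ t ^ 2 ^ (j + N) - 1 := by
      rw [hpow]; linarith
    have hid : C * (16 / 49 : ℝ) ^ j * (((49 : ℝ) / 4) ^ (j + 1) * (45 / 49))
        = (4 : ℝ) ^ (j + N) := by
      have e1 : ((16 : ℝ) / 49) ^ j * ((49 : ℝ) / 4) ^ j = (4 : ℝ) ^ j := by
        rw [← mul_pow]; norm_num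
      calc C * (16 / 49 : ℝ) ^ j * (((49 : ℝ) / 4) ^ (j + 1) * (45 / 49))
          = μ ^ 2 * (((16 : ℝ) / 49) ^ j * ((49 : ℝ) / 4) ^ j) *
            ((16 / 45) * (49 / 4) * (45 / 49)) := by
            rw [hCdef, pow_succ]; ring
        _ = μ ^ 2 * (4 : ℝ) ^ j * 4 := by rw [e1]; norm_num
        _ = (4 : ℝ) ^ (N - 1) * ((4 : ℝ) ^ j * 4) := by rw [h4μ]; ring
        _ = (4 : ℝ) ^ (j + N) := by rw [hk, pow_add, pow_succ]
    have hdpos : (0 : ℝ) < t ^ 2 ^ (j + N) - 1 := by linarith [hden (j + N)]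
    show (4 : ℝ) ^ (j + N) / (t ^ 2 ^ (j + N) - 1) ≤ C * (16 / 49) ^ j
    rw [div_le_iff₀ hdpos, ← hid]
    have hCr : (0 : ℝ) ≤ C * (16 / 49 : ℝ) ^ j :=
      mul_nonneg hCpos.le (by positivity)
    exact mul_le_mul_of_nonneg_left h2 hCr
  -- summability
  have hgeo : Summable (fun j : ℕ => C * (16 / 49 : ℝ) ^ j) :=
    (summable_geometric_of_lt_one (by norm_num) (by norm_num)).mul_left C
  have htsummable : Summable (fun j : ℕ => f (j + N)) :=
    hgeo.of_nonneg_of_le (fun j => (hfpos _).le) htail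
  have hsum : Summable f := (summable_nat_add_iff N).mp htsummable
  -- head bound
  have hhead : ∑ i ∈ Finset.range N, f i ≤ 2 * μ / ε := by
    have step : ∀ i ∈ Finset.range N, f i ≤ (2 : ℝ) ^ i / ε := by
      intro i _
      have hb := one_add_mul_le_pow (show (-2 : ℝ) ≤ ε by linarith) (2 ^ i)
      rw [h1t] at hb
      push_cast at hb
      have hd : (2 : ℝ) ^ i * ε ≤ t ^ 2 ^ i - 1 := by linarith
      have hdp : (0 : ℝ) < (2 : ℝ) ^ i * ε := mul_pos (by positivity) hε
      calc f i ≤ (4 : ℝ) ^ i / ((2 : ℝ) ^ i * ε) := by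
            simp only [hfdef]
            gcongr
        _ = (2 : ℝ) ^ i / ε := by
            rw [show (4 : ℝ) ^ i = 2 ^ i * 2 ^ i by rw [← mul_pow]; norm_num]
            rw [mul_div_mul_left _ _ (by positivity : ((2 : ℝ) ^ i) ≠ 0)]
    calc ∑ i ∈ Finset.range N, f i ≤ ∑ i ∈ Finset.range N, (2 : ℝ) ^ i / ε :=
          Finset.sum_le_sum step
      _ = (∑ i ∈ Finset.range N, (2 : ℝ) ^ i) / ε := by rw [Finset.sum_div]
      _ = ((2 : ℝ) ^ N - 1) / ε := by
          rw [geom_sum_eq (by norm_num) N]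
          norm_num
      _ ≤ 2 * μ / ε := by
          rw [h2N]
          gcongr
          linarith
  -- tail sum bound
  have htailsum : ∑' j : ℕ, f (j + N) ≤ μ ^ 2 * (784 / 1485) := by
    calc ∑' j : ℕ, f (j + N) ≤ ∑' j : ℕ, C * (16 / 49 : ℝ) ^ j :=
          Summable.tsum_le_tsum htail htsummable hgeo
      _ = C * (1 - 16 / 49 : ℝ)⁻¹ := by
          rw [tsum_mul_left, tsum_geometric_of_lt_one (by norm_num) (by norm_num)]
      _ = C * (49 / 33 : ℝ) := by norm_num
      _ = μ ^ 2 * (784 / 1485) := by rw [hCdef]; ring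
  -- final arithmetic
  have hμεpos : 0 < μ * ε := mul_pos hμpos hε
  have final : 2 * μ / ε + μ ^ 2 * (784 / 1485) ≤ 24 / ε ^ 2 := by
    rw [le_div_iff₀ (pow_pos hε 2)]
    have expand : (2 * μ / ε + μ ^ 2 * (784 / 1485)) * ε ^ 2
        = 2 * (μ * ε) + (μ * ε) ^ 2 * (784 / 1485) := by
      field_simp
    rw [expand]
    nlinarith [mul_nonneg hμεpos.le (sub_pos.mpr hμ5).le]
  calc ∑' i : ℕ, f i = ∑ i ∈ Finset.range N, f i + ∑' j : ℕ, f (j + N) :=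
        (Summable.sum_add_tsum_nat_add N hsum).symm
    _ ≤ 2 * μ / ε + μ ^ 2 * (784 / 1485) := add_le_add hhead htailsum
    _ ≤ 24 / ε ^ 2 := final
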